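/- Let R be a finite commutative local ring. Then the number of polynomial permutations of the ring of dual numbers R[α] satisfies |P(R[α])| = |F(R)| · |P(R)| · |St_α(R)|, where |F(R)| is the number of polynomial functions on R, |P(R)| is the number of polynomial permutations of R, and |St_α(R)| is the order of the pointwise stabilizer of R in P(R[α]). -/
import Mathlib


open Polynomial

/-- The set of polynomial functions on a commutative ring `A`. -/
def polyFunctions (A : Type*) [CommRing A] : Set (A → A) :=
  {G : A → A | ∃ f : Polynomial A, ∀ a, G a = f.eval a}

/-- The set of polynomial permutations of a commutative ring `A`. -/
def polyPermutations (A : Type*) [CommRing A] : Set (A → A) :=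
  {G : A → A | (∃ f : Polynomial A, ∀ a, G a = f.eval a) ∧ Function.Bijective G}

/-- The pointwise stabilizer `St_α(R)` of `R` in the group of polynomial
permutations of the dual numbers `R[α]`. -/
def polyStabilizer (R : Type*) [CommRing R] :
    Set (DualNumber R → DualNumber R) :=
  {G : DualNumber R → DualNumber R |
    (∃ f : Polynomial (DualNumber R), ∀ a, G a = f.eval a) ∧
      Function.Bijective G ∧
        ∀ r : R, G (algebraMap R (DualNumber R) r) = algebraMap R (DualNumber R) r}


section SqZero
variable {S : Type*} [CommRing S]

lemma eval_of_sq_eq_zero (p : S[X]) {t : S} (ht : t * t = 0) :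
    p.eval t = p.coeff 0 + p.coeff 1 * t := by
  induction p using Polynomial.induction_on' with
  | add p q hp hq => simp only [eval_add, coeff_add, hp, hq]; ring
  | monomial n c =>
    match n with
    | 0 => simp
    | 1 => simp [coeff_monomial]
    | (n+2) =>
      have h2 : t ^ (n + 2) = 0 := by
        have : t ^ (n + 2) = t * t * t ^ n := by ring
        rw [this, ht, zero_mul]
      simp [coeff_monomial, eval_monomial, h2]

lemma eval_add_sq_zero (p : S[X]) (s : S) {t : S} (ht : t * t = 0) :
    p.eval (s + t) = p.eval s + p.derivative.eval s * t := by
  rw [add_comm s t, ← taylor_eval, eval_of_sq_eq_zero _ ht, taylor_coeff_zero,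
    taylor_coeff_one]

lemma exists_poly_iterate {A : Type*} [CommRing A] {F : A → A}
    (hp : ∃ f : Polynomial A, ∀ a, F a = f.eval a) (n : ℕ) :
    ∃ f : Polynomial A, ∀ a, F^[n] a = f.eval a := by
  induction n with
  | zero => exact ⟨X, by simp⟩
  | succ n ih =>
    obtain ⟨g, hg⟩ := ih
    obtain ⟨f, hf⟩ := hp
    refine ⟨g.comp f, fun a => ?_⟩
    rw [Function.iterate_succ_apply, hg, eval_comp, hf]

lemma exists_poly_inverse {A : Type*} [CommRing A] [Finite A] {F : A → A}
    (hp : ∃ f : Polynomial A, ∀ a, F a = f.eval a) (hb : Function.Bijective F) :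
    ∃ Fi : A → A, (∃ f : Polynomial A, ∀ a, Fi a = f.eval a) ∧
      (∀ x, Fi (F x) = x) ∧ ∀ x, F (Fi x) = x := by
  classical
  let e : Equiv.Perm A := Equiv.ofBijective F hb
  have hpos : 0 < orderOf e := orderOf_pos e
  have hone : ∀ x, F^[orderOf e] x = x := by
    intro x
    have h1 : ⇑(e ^ orderOf e) = F^[orderOf e] := Equiv.Perm.coe_pow e (orderOf e)
    rw [pow_orderOf_eq_one] at h1
    exact (congrFun h1 x).symm
  refine ⟨F^[orderOf e - 1], exists_poly_iterate hp _, fun x => ?_, fun x => ?_⟩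
  · have := hone x
    rwa [← Nat.succ_pred_eq_of_pos hpos, Function.iterate_succ_apply] at this
  · have := hone x
    rwa [← Nat.succ_pred_eq_of_pos hpos, Function.iterate_succ_apply'] at this

end SqZero

section Dual
open TrivSqZeroExt

variable {R : Type*} [CommRing R]

lemma dn_mul_inr (z : DualNumber R) (b : R) : z * inr b = inr (z.fst * b) := by
  conv_lhs => rw [← inl_fst_add_inr_snd_eq z]
  rw [add_mul, inl_mul_inr, inr_mul_inr, add_zero, smul_eq_mul]

lemma dn_inr_sq (b : R) : (inr b : DualNumber R) * inr b = 0 := inr_mul_inr R b b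

/-- Key evaluation formula for polynomials over dual numbers. -/
lemma dn_eval (f : Polynomial (DualNumber R)) (x : DualNumber R) :
    f.eval x = f.eval (inl x.fst) + inr ((f.derivative.eval (inl x.fst)).fst * x.snd) := by
  conv_lhs => rw [← inl_fst_add_inr_snd_eq x]
  rw [eval_add_sq_zero f (inl x.fst) (dn_inr_sq x.snd), dn_mul_inr]

lemma dn_fst_eval_inl (f : Polynomial (DualNumber R)) (a : R) :
    (f.eval (inl a)).fst = (f.map (fstHom R R R).toRingHom).eval a := by
  have := Polynomial.eval₂_hom (fstHom R R R).toRingHom (inl a : DualNumber R) (p := f)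
  rw [← Polynomial.eval_map] at this
  simpa using this.symm

lemma dn_exists_snd_poly (f : Polynomial (DualNumber R)) :
    ∃ h : Polynomial R, ∀ a : R, (f.eval (inl a)).snd = h.eval a := by
  induction f using Polynomial.induction_on' with
  | add p q hp hq =>
    obtain ⟨h1, hh1⟩ := hp; obtain ⟨h2, hh2⟩ := hq
    exact ⟨h1 + h2, fun a => by simp [hh1 a, hh2 a]⟩
  | monomial n c =>
    refine ⟨C c.snd * X ^ n, fun a => ?_⟩
    have hpow : (inl a : DualNumber R) ^ n = inl (a ^ n) := by
      rw [inl_pow]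
    rw [eval_monomial, hpow, snd_mul, fst_inl, snd_inl, smul_zero, zero_add]
    simp only [eval_mul, eval_C, eval_pow, eval_X, op_smul_eq_mul]

lemma dn_eval_map_inl (g : Polynomial R) (x : DualNumber R) :
    (g.map (inlHom R R)).eval x
      = inl (g.eval x.fst) + inr (g.derivative.eval x.fst * x.snd) := by
  have h1 : ∀ (p : Polynomial R) (a : R),
      (p.map (inlHom R R)).eval (inl a : DualNumber R) = inl (p.eval a) := by
    intro p a
    have := Polynomial.eval₂_hom (inlHom R R) a (p := p)
    rwa [← Polynomial.eval_map] at this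
  rw [dn_eval, h1, derivative_map, h1]
  simp

end Dual

section Local
variable {R : Type*} [CommRing R] [Finite R] [IsLocalRing R]

lemma exists_socle (h : ¬ IsField R) :
    ∃ t : R, t ≠ 0 ∧ t * t = 0 ∧ ∀ x : R, ¬ IsUnit x → t * x = 0 := by
  classical
  have hnil : IsNilpotent (IsLocalRing.maximalIdeal R) := by
    have := IsArtinianRing.isNilpotent_jacobson_bot (R := R)
    rwa [IsLocalRing.jacobson_eq_maximalIdeal ⊥ bot_ne_top] at this
  have hm : IsLocalRing.maximalIdeal R ≠ ⊥ :=
    fun hb => h (IsLocalRing.isField_iff_maximalIdeal_eq.mpr hb)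
  obtain ⟨n, hn⟩ := hnil
  have hex : ∃ k : ℕ, IsLocalRing.maximalIdeal R ^ (k + 1) = ⊥ := by
    match n, hn with
    | 0, hn =>
      exfalso
      rw [pow_zero] at hn
      exact one_ne_zero (α := R) (by
        have : (1 : R) ∈ (1 : Ideal R) := Submodule.one_le.mp le_rfl
        rw [hn] at this
        simpa using this)
    | (m+1), hn => exact ⟨m, hn⟩
  set k0 := Nat.find hex with hk0
  have hzero : IsLocalRing.maximalIdeal R ^ (k0 + 1) = ⊥ := Nat.find_spec hex
  have hk0pos : 0 < k0 := by
    rcases Nat.eq_zero_or_pos k0 with h0 | h0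
    · rw [h0, zero_add, pow_one] at hzero; exact absurd hzero hm
    · exact h0
  have hne : IsLocalRing.maximalIdeal R ^ k0 ≠ ⊥ := by
    intro hb
    have := Nat.find_min hex (m := k0 - 1) (by omega)
    rw [Nat.sub_add_cancel hk0pos] at this
    exact this hb
  obtain ⟨t, htm, ht0⟩ := Submodule.exists_mem_ne_zero_of_ne_bot hne
  have key : ∀ x : R, ¬ IsUnit x → t * x = 0 := by
    intro x hx
    have hxm : x ∈ IsLocalRing.maximalIdeal R := hx
    have : t * x ∈ IsLocalRing.maximalIdeal R ^ (k0 + 1) := by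
      rw [pow_succ]
      exact Ideal.mul_mem_mul htm hxm
    have h2 : t * x ∈ (⊥ : Ideal R) := hzero ▸ this
    simpa using h2
  refine ⟨t, ht0, key t ?_, key⟩
  intro hu
  have htmm : t ∈ IsLocalRing.maximalIdeal R :=
    Ideal.pow_le_self hk0pos.ne' htm
  exact htmm hu

lemma exists_good_poly {G : R → R} (hG : G ∈ polyPermutations R) :
    ∃ g : Polynomial R, (∀ a, G a = g.eval a) ∧ ∀ a, IsUnit (g.derivative.eval a) := by
  classical
  obtain ⟨⟨g, hg⟩, hbij⟩ := hG
  by_cases hF : IsField R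
  · letI : Field R := hF.toField
    letI : Fintype R := Fintype.ofFinite R
    set q := Fintype.card R with hq
    obtain ⟨w, hw⟩ : ∃ w : Polynomial R, ∀ a : R,
        w.eval a = g.derivative.eval a - 1 := by
      refine ⟨Lagrange.interpolate Finset.univ id
        (fun a => g.derivative.eval a - 1), fun a => ?_⟩
      exact Lagrange.eval_interpolate_at_node _ (Set.injOn_id _) (Finset.mem_univ a)
    refine ⟨g + (X ^ q - X) * w, fun a => ?_, fun a => ?_⟩
    · rw [eval_add, eval_mul, eval_sub, eval_pow, eval_X, FiniteField.pow_card,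
        sub_self, zero_mul, add_zero, hg]
    · rw [derivative_add, derivative_mul, derivative_sub, derivative_X_pow,
        derivative_X]
      simp only [eval_add, eval_mul, eval_sub, eval_pow, eval_X, eval_one,
        eval_natCast, eval_C]
      have hc : (q : R) = 0 := FiniteField.cast_card_eq_zero R
      rw [FiniteField.pow_card a, sub_self, zero_mul, add_zero, hc, hw a]
      have : eval a (derivative g) +
          (0 * a ^ (q - 1) - 1) * (eval a (derivative g) - 1) = 1 := by ring
      rw [this]
      exact isUnit_one
  · obtain ⟨t, ht0, htt, htz⟩ := exists_socle hF
    refine ⟨g, hg, fun a => ?_⟩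
    by_contra hu
    have h1 : G (a + t) = G a := by
      rw [hg, hg, eval_add_sq_zero g a htt, mul_comm, htz _ hu, add_zero]
    have h2 := hbij.1 h1
    exact ht0 (by simpa using h2)
end Local

section Main
open TrivSqZeroExt
variable {R : Type*} [CommRing R]

instance dnFinite [Finite R] : Finite (DualNumber R) :=
  Finite.of_equiv (R × R) (Equiv.refl _)

lemma dn_fst_F (f : Polynomial (DualNumber R)) (x : DualNumber R) :
    (f.eval x).fst = (f.eval (inl x.fst)).fst := by
  rw [dn_eval f x]
  simp

lemma mem_perm_fst [Finite R] {F : DualNumber R → DualNumber R}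
    (hF : F ∈ polyPermutations (DualNumber R)) :
    (fun a => (F (inl a)).fst) ∈ polyPermutations R := by
  obtain ⟨⟨f, hf⟩, hbij⟩ := hF
  constructor
  · exact ⟨f.map (fstHom R R R).toRingHom, fun a => by show (F (inl a)).fst = _; rw [hf, dn_fst_eval_inl]⟩
  · rw [← Finite.surjective_iff_bijective]
    intro c
    obtain ⟨x, hx⟩ := hbij.2 (inl c)
    refine ⟨x.fst, ?_⟩
    show (F (inl x.fst)).fst = c
    rw [hf, ← dn_fst_F, ← hf, hx, fst_inl]

lemma mem_fun_snd {F : DualNumber R → DualNumber R}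
    (hF : F ∈ polyPermutations (DualNumber R)) :
    (fun a => (F (inl a)).snd) ∈ polyFunctions R := by
  obtain ⟨⟨f, hf⟩, hbij⟩ := hF
  obtain ⟨h, hh⟩ := dn_exists_snd_poly f
  exact ⟨h, fun a => by show (F (inl a)).snd = _; rw [hf, hh]⟩

lemma exists_lift [Finite R] [IsLocalRing R] {G H : R → R}
    (hG : G ∈ polyPermutations R) (hH : H ∈ polyFunctions R) :
    ∃ F, F ∈ polyPermutations (DualNumber R) ∧
      ∀ a : R, F (inl a) = inl (G a) + inr (H a) := by
  obtain ⟨g, hg, hgu⟩ := exists_good_poly hG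
  obtain ⟨h, hh⟩ := hH
  set f : Polynomial (DualNumber R) :=
    g.map (inlHom R R) + (h.map (inlHom R R)) * C (inr 1) with hfdef
  have heval : ∀ x : DualNumber R,
      f.eval x = inl (g.eval x.fst)
        + inr (g.derivative.eval x.fst * x.snd + h.eval x.fst) := by
    intro x
    rw [hfdef, eval_add, eval_mul, eval_C, dn_eval_map_inl, dn_eval_map_inl,
      dn_mul_inr]
    refine TrivSqZeroExt.ext ?_ ?_ <;>
      simp [mul_one]
  have hmem : (fun x : DualNumber R => f.eval x) ∈ polyPermutations (DualNumber R) := by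
    refine ⟨⟨f, fun a => rfl⟩, ?_⟩
    rw [← Finite.injective_iff_bijective]
    intro x y hxy
    simp only [heval] at hxy
    have h1 : g.eval x.fst = g.eval y.fst := by
      have := congrArg TrivSqZeroExt.fst hxy
      simpa using this
    have h2 : x.fst = y.fst := hG.2.1 (by rw [hg, hg, h1])
    have h3 : g.derivative.eval x.fst * x.snd + h.eval x.fst
        = g.derivative.eval x.fst * y.snd + h.eval x.fst := by
      have := congrArg TrivSqZeroExt.snd hxy
      simpa [h2] using this
    have h4 : x.snd = y.snd := (hgu x.fst).mul_left_cancel (add_right_cancel h3)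
    exact TrivSqZeroExt.ext h2 h4
  refine ⟨_, hmem, fun a => ?_⟩
  show f.eval (inl a) = _
  rw [heval, fst_inl, snd_inl, mul_zero, zero_add, ← hg, ← hh]

end Main

/-- **Theorem.**
For a finite commutative local ring `R`,
`|P(R[α])| = |F(R)| · |P(R)| · |St_α(R)|`. -/
theorem card_polyPerm_dualNumber_local (R : Type*) [CommRing R] [Finite R]
    [IsLocalRing R] :
    Nat.card (polyPermutations (DualNumber R)) =
      Nat.card (polyFunctions R) * Nat.card (polyPermutations R) *
        Nat.card (polyStabilizer R) := by
  classical
  have halg : ∀ r : R, algebraMap R (DualNumber R) r = TrivSqZeroExt.inl r :=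
    fun r => congrFun (TrivSqZeroExt.algebraMap_eq_inl ..) r
  have hcomp_poly : ∀ {F G : DualNumber R → DualNumber R},
      (∃ f : Polynomial (DualNumber R), ∀ a, F a = f.eval a) →
      (∃ f : Polynomial (DualNumber R), ∀ a, G a = f.eval a) →
      ∃ f : Polynomial (DualNumber R), ∀ a, (F ∘ G) a = f.eval a := by
    rintro F G ⟨f, hf⟩ ⟨g, hg⟩
    exact ⟨f.comp g, fun a => by
      show F (G a) = _
      rw [eval_comp, hf, hg]⟩
  have hsec : ∀ y : polyFunctions R × polyPermutations R,
      ∃ F, F ∈ polyPermutations (DualNumber R) ∧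
        ∀ a : R, F (TrivSqZeroExt.inl a)
          = TrivSqZeroExt.inl (y.2.1 a) + TrivSqZeroExt.inr (y.1.1 a) :=
    fun y => exists_lift y.2.2 y.1.2
  choose Fy hFy hFy2 using hsec
  have hinv : ∀ y, ∃ Fi : DualNumber R → DualNumber R,
      (∃ f : Polynomial (DualNumber R), ∀ a, Fi a = f.eval a) ∧
        (∀ x, Fi (Fy y x) = x) ∧ ∀ x, Fy y (Fi x) = x :=
    fun y => exists_poly_inverse (hFy y).1 (hFy y).2
  choose Fi hFiP hFi1 hFi2 using hinv
  let θ : polyPermutations (DualNumber R) → polyFunctions R × polyPermutations R :=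
    fun F => (⟨fun a => (F.1 (TrivSqZeroExt.inl a)).snd, mem_fun_snd F.2⟩,
              ⟨fun a => (F.1 (TrivSqZeroExt.inl a)).fst, mem_perm_fst F.2⟩)
  have hkey : ∀ (F : polyPermutations (DualNumber R)) (a : R),
      Fy (θ F) (TrivSqZeroExt.inl a) = F.1 (TrivSqZeroExt.inl a) := by
    intro F a
    rw [hFy2 (θ F) a]
    exact TrivSqZeroExt.inl_fst_add_inr_snd_eq _
  have hstab : ∀ F : polyPermutations (DualNumber R),
      (Fi (θ F) ∘ F.1) ∈ polyStabilizer R := by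
    intro F
    refine ⟨hcomp_poly (hFiP (θ F)) F.2.1, ?_, ?_⟩
    · have hFiB : Function.Bijective (Fi (θ F)) :=
        Function.bijective_iff_has_inverse.mpr
          ⟨Fy (θ F), hFi2 (θ F), hFi1 (θ F)⟩
      exact hFiB.comp F.2.2
    · intro r
      show Fi (θ F) (F.1 (algebraMap R (DualNumber R) r)) = _
      rw [halg r, ← hkey F r, hFi1]
  have hmemb : ∀ p : (polyFunctions R × polyPermutations R) × polyStabilizer R,
      (Fy p.1 ∘ p.2.1) ∈ polyPermutations (DualNumber R) :=
    fun p => ⟨hcomp_poly (hFy p.1).1 p.2.2.1, (hFy p.1).2.comp p.2.2.2.1⟩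
  let e : polyPermutations (DualNumber R) ≃
      (polyFunctions R × polyPermutations R) × polyStabilizer R :=
    { toFun := fun F => (θ F, ⟨Fi (θ F) ∘ F.1, hstab F⟩)
      invFun := fun p => ⟨Fy p.1 ∘ p.2.1, hmemb p⟩
      left_inv := by
        intro F
        apply Subtype.ext
        funext x
        show Fy (θ F) (Fi (θ F) (F.1 x)) = F.1 x
        exact hFi2 (θ F) (F.1 x)
      right_inv := by
        rintro ⟨y, S⟩
        have hSfix : ∀ a : R, S.1 (TrivSqZeroExt.inl a) = TrivSqZeroExt.inl a := by
          intro a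
          have := S.2.2.2 a
          rwa [halg a] at this
        have hθ : θ ⟨Fy y ∘ S.1, hmemb (y, S)⟩ = y := by
          apply Prod.ext
          · apply Subtype.ext
            funext a
            show (Fy y (S.1 (TrivSqZeroExt.inl a))).snd = y.1.1 a
            rw [hSfix a, hFy2 y a]
            simp
          · apply Subtype.ext
            funext a
            show (Fy y (S.1 (TrivSqZeroExt.inl a))).fst = y.2.1 a
            rw [hSfix a, hFy2 y a]
            simp
        refine Prod.ext hθ ?_
        apply Subtype.ext
        funext x
        show Fi (θ ⟨Fy y ∘ S.1, hmemb (y, S)⟩) (Fy y (S.1 x)) = S.1 x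
        rw [hθ, hFi1 y (S.1 x)] }
  rw [Nat.card_congr e, Nat.card_prod, Nat.card_prod]
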